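/- Let V be a d×d positive definite real matrix, let X_1, …, X_n ∈ ℝ^d, and define V_t = V + Σ_{s=1}^t X_s X_sᵀ for t = 0, 1, …, n. Then Σ_{t=1}^n min{1, X_tᵀ V_{t-1}⁻¹ X_t} ≤ 2·(log det(V_n) − log det(V)). -/

import Mathlib

open Matrix

lemma psd_vecMulVec_self {d : ℕ} (x : Fin d → ℝ) : (vecMulVec x x).PosSemidef := by
  have h := Matrix.posSemidef_self_mul_conjTranspose (Matrix.replicateCol Unit x)
  simpa [Matrix.conjTranspose, Matrix.transpose_replicateCol, Matrix.map_id, ← Matrix.vecMulVec_eq,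
    show ⇑(starRingEnd ℝ) = id from funext fun x => rfl] using h

lemma min_one_le_two_log {u : ℝ} (hu : 0 ≤ u) : min 1 u ≤ 2 * Real.log (1 + u) := by
  have h1u : (0:ℝ) < 1 + u := by linarith
  have hlog : 1 - (1 + u)⁻¹ ≤ Real.log (1 + u) := Real.one_sub_inv_le_log_of_pos h1u
  rcases le_total u 1 with h | h
  · rw [min_eq_right h]
    have : u / 2 ≤ 1 - (1 + u)⁻¹ := by
      rw [inv_eq_one_div, sub_div' h1u.ne', div_le_div_iff₀ (by norm_num) h1u]
      nlinarith
    linarith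
  · rw [min_eq_left h]
    have h2 : Real.log 2 ≤ Real.log (1 + u) := Real.log_le_log (by norm_num) (by linarith)
    nlinarith [Real.log_two_gt_d9]

lemma det_add_vecMulVec_self {d : ℕ} {A : Matrix (Fin d) (Fin d) ℝ} (hA : A.PosDef)
    (u : Fin d → ℝ) :
    (A + vecMulVec u u).det = A.det * (1 + u ⬝ᵥ (A⁻¹ *ᵥ u)) := by
  rw [Matrix.vecMulVec_eq Unit, Matrix.det_add_replicateCol_mul_replicateRow hA.det_pos.ne'.isUnit]
  congr 1
  rw [Matrix.det_unique]
  simp only [Matrix.mul_apply, Matrix.replicateRow, Matrix.replicateCol, dotProduct, mulVec, Matrix.add_apply,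
    Matrix.one_apply_eq, Finset.mul_sum, Finset.sum_mul, Matrix.of_apply]
  congr 1
  rw [Finset.sum_comm]
  exact Finset.sum_congr rfl fun _ _ => Finset.sum_congr rfl fun _ _ => by ring

/-- Elliptical potential lemma:
`∑ₜ min {1, Xₜᵀ Vₜ₋₁⁻¹ Xₜ} ≤ 2 (log det Vₙ − log det V)`, where
`Vₜ = V + ∑_{s<t} X_s X_sᵀ` (vectors indexed from `0`). -/
theorem sum_min_quadratic_le_two_log_det {d : ℕ} (V : Matrix (Fin d) (Fin d) ℝ)
    (hV : V.PosDef) (n : ℕ) (X : ℕ → (Fin d → ℝ))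
    (W : ℕ → Matrix (Fin d) (Fin d) ℝ)
    (hW : ∀ t, W t = V + ∑ s ∈ Finset.range t, vecMulVec (X s) (X s)) :
    ∑ t ∈ Finset.range n, min 1 (X t ⬝ᵥ ((W t)⁻¹ *ᵥ X t)) ≤
      2 * (Real.log (W n).det - Real.log V.det) := by
  have hWpd : ∀ t, (W t).PosDef := by
    intro t
    rw [hW t]
    refine hV.add_posSemidef ?_
    induction t with
    | zero => simpa using (Matrix.PosSemidef.zero : (0 : Matrix (Fin d) (Fin d) ℝ).PosSemidef)
    | succ m ih => rw [Finset.sum_range_succ]; exact ih.add (psd_vecMulVec_self _)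
  induction n with
  | zero =>
    simp [hW 0, hV.det_pos]
  | succ m ih =>
    rw [Finset.sum_range_succ]
    set u := X m ⬝ᵥ ((W m)⁻¹ *ᵥ X m) with hu
    have hu0 : 0 ≤ u := by
      rcases eq_or_ne (X m) 0 with h | h
      · simp [hu, h]
      · exact le_of_lt (((hWpd m).inv).dotProduct_mulVec_pos h)
    have hWsucc : W (m + 1) = W m + vecMulVec (X m) (X m) := by
      rw [hW (m + 1), hW m, Finset.sum_range_succ, add_assoc]
    have hdet : (W (m + 1)).det = (W m).det * (1 + u) := by
      rw [hWsucc, det_add_vecMulVec_self (hWpd m)]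
    have hlogdet : Real.log (W (m + 1)).det = Real.log (W m).det + Real.log (1 + u) := by
      rw [hdet, Real.log_mul (hWpd m).det_pos.ne' (by linarith)]
    have hmin : min 1 u ≤ 2 * Real.log (1 + u) := min_one_le_two_log hu0
    calc ∑ t ∈ Finset.range m, min 1 (X t ⬝ᵥ ((W t)⁻¹ *ᵥ X t)) + min 1 u
        ≤ 2 * (Real.log (W m).det - Real.log V.det) + 2 * Real.log (1 + u) := by
          exact add_le_add ih hmin
      _ = 2 * (Real.log (W (m + 1)).det - Real.log V.det) := by
          rw [hlogdet]; ring
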